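/- Let λ₊ = θ₀/(2(1−α)). Then λ₊ ∈ (0,1) and there exists a constant C > 0 such that: for every sign sequence η : ℕ → {−1,+1}, every sequence (u_k)_{k≥0} with 2|u_k|(1−α) ≤ θ₀ and u_k = S_{η_k}(u_{k+1}) for all k ≥ 0, and every n ≥ 1, the Euclidean norm of the vector (B_{η_{n−1}} · B_{η_{n−2}} · ⋯ · B_{η_0})·(u₀, 1)ᵀ is at most C · λ₊ⁿ · ‖(u₀, 1)‖. -/

import Mathlib

noncomputable section

/-- `θ₀ = α − √(α² + 2α − 2)`. -/
def theta0 (α : ℝ) : ℝ := α - Real.sqrt (α ^ 2 + 2 * α - 2)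

/-- The Möbius map `S_η(u) = η/(2u(1−α) + 2α)` acting on unstable directions. -/
def Smap (α η u : ℝ) : ℝ := η / (2 * u * (1 - α) + 2 * α)

/-- The inverse derivative matrix `B_ε`: rows `(−α/(1−α), ε/(2(1−α)))` and `(1, 0)`. -/
def Bmat (α ε : ℝ) : Matrix (Fin 2) (Fin 2) ℝ :=
  !![-α / (1 - α), ε / (2 * (1 - α)); 1, 0]

/-- `Bprod α η n = B_{η(n−1)} · B_{η(n−2)} · ⋯ · B_{η 0}`. -/
def Bprod (α : ℝ) (η : ℕ → ℝ) : ℕ → Matrix (Fin 2) (Fin 2) ℝ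
  | 0 => 1
  | n + 1 => Bmat α (η n) * Bprod α η n

/-- Euclidean norm of a vector in `ℝ²`. -/
def eNorm (x : Fin 2 → ℝ) : ℝ := Real.sqrt (x 0 ^ 2 + x 1 ^ 2)

/-- with `λ₊ = θ₀/(2(1−α))` one has `λ₊ ∈ (0,1)`, and there is `C > 0` such
that for every sign sequence `η`, every backward-invariant sequence `(u_k)` with
`2|u_k|(1−α) ≤ θ₀` and `u_k = S_{η_k}(u_{k+1})`, and every `n ≥ 1`,
`‖B_{η_{n−1}}⋯B_{η_0}·(u₀, 1)ᵀ‖ ≤ C·λ₊ⁿ·‖(u₀, 1)‖`. -/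
theorem statement5 (α : ℝ) (hα : α ∈ Set.Ioo (3/4 : ℝ) 1) :
    (0 < theta0 α / (2 * (1 - α)) ∧ theta0 α / (2 * (1 - α)) < 1) ∧
    ∃ C > (0 : ℝ), ∀ η : ℕ → ℝ, (∀ k, η k = 1 ∨ η k = -1) →
      ∀ u : ℕ → ℝ, (∀ k, 2 * |u k| * (1 - α) ≤ theta0 α) →
        (∀ k, u k = Smap α (η k) (u (k + 1))) →
        ∀ n : ℕ, 1 ≤ n →
          eNorm ((Bprod α η n).mulVec ![u 0, 1]) ≤
            C * (theta0 α / (2 * (1 - α))) ^ n * eNorm ![u 0, 1] := by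
  obtain ⟨hα0, hα1⟩ := hα
  have hd : (0:ℝ) < α^2 + 2*α - 2 := by nlinarith
  have hs0 : 0 ≤ Real.sqrt (α^2+2*α-2) := Real.sqrt_nonneg _
  have hs2 : (Real.sqrt (α^2+2*α-2))^2 = α^2+2*α-2 := Real.sq_sqrt hd.le
  set s := Real.sqrt (α^2+2*α-2) with hs_def
  have h1α : (0:ℝ) < 1 - α := by linarith
  have hθ : theta0 α = α - s := rfl
  have hsα : s < α := by nlinarith
  have hθ0 : 0 < theta0 α := by rw [hθ]; linarith
  have hs3 : 3*α - 2 < s := by nlinarith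
  set lam := theta0 α / (2 * (1 - α)) with hlam_def
  have hlam0 : 0 < lam := div_pos hθ0 (by linarith)
  have hlam1 : lam < 1 := by
    rw [hlam_def, div_lt_one (by linarith : (0:ℝ) < 2*(1-α)), hθ]; linarith
  refine ⟨⟨hlam0, hlam1⟩, Real.sqrt 2, by positivity, ?_⟩
  intro η hη u hub hu n hn
  have hub' : ∀ k, |u k| ≤ lam := by
    intro k
    rw [hlam_def, le_div_iff₀ (by linarith : (0:ℝ) < 2*(1-α))]
    nlinarith [hub k]
  have hden : ∀ k, 0 < 2 * u k * (1-α) + 2*α := by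
    intro k
    nlinarith [hub k, neg_abs_le (u k), abs_nonneg (u k)]
  have hstep : ∀ k, (Bmat α (η k)).mulVec ![u k, 1] = u k • ![u (k+1), 1] := by
    intro k
    have hdk := hden (k+1)
    have h2 : u k * (2 * u (k+1) * (1-α) + 2*α) = η k := by
      rw [hu k, Smap]; field_simp
      rw [mul_div_assoc, div_self (ne_of_gt (by linarith)), mul_one]
    funext i
    fin_cases i <;>
      simp [Bmat, Matrix.mulVec, dotProduct, Fin.sum_univ_two]
    field_simp
    linear_combination (-1) * h2
  have hprod : ∀ m, (Bprod α η m).mulVec ![u 0, 1]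
      = (∏ k ∈ Finset.range m, u k) • ![u m, 1] := by
    intro m
    induction m with
    | zero => simp [Bprod]
    | succ p ih =>
      rw [show Bprod α η (p+1) = Bmat α (η p) * Bprod α η p from rfl,
        ← Matrix.mulVec_mulVec, ih, Matrix.mulVec_smul, hstep p, smul_smul,
        Finset.prod_range_succ]
  have hnorm : ∀ (c x : ℝ), eNorm (c • ![x, 1]) = |c| * Real.sqrt (x^2 + 1) := by
    intro c x
    simp only [eNorm, Pi.smul_apply, smul_eq_mul, Matrix.cons_val_zero,
      Matrix.cons_val_one, Matrix.head_cons]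
    rw [show (c*x)^2 + (c*1)^2 = c^2*(x^2+1) by ring,
      Real.sqrt_mul (sq_nonneg c), Real.sqrt_sq_eq_abs]
  rw [hprod n, hnorm]
  have hprodle : |∏ k ∈ Finset.range n, u k| ≤ lam ^ n := by
    rw [Finset.abs_prod]
    calc ∏ k ∈ Finset.range n, |u k| ≤ ∏ k ∈ Finset.range n, lam :=
          Finset.prod_le_prod (fun i _ => abs_nonneg _) (fun i _ => hub' i)
      _ = lam ^ n := by rw [Finset.prod_const, Finset.card_range]
  have hsq : Real.sqrt ((u n)^2 + 1) ≤ Real.sqrt 2 := by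
    apply Real.sqrt_le_sqrt
    nlinarith [hub' n, abs_nonneg (u n), sq_abs (u n)]
  have h1le : 1 ≤ eNorm ![u 0, 1] := by
    simp only [eNorm, Matrix.cons_val_zero, Matrix.cons_val_one, Matrix.head_cons]
    have h := Real.sqrt_le_sqrt (show (1:ℝ) ≤ u 0 ^ 2 + 1 ^ 2 by nlinarith [sq_nonneg (u 0)])
    simpa using h
  calc |∏ k ∈ Finset.range n, u k| * Real.sqrt ((u n)^2 + 1)
      ≤ lam ^ n * Real.sqrt 2 :=
        mul_le_mul hprodle hsq (Real.sqrt_nonneg _) (pow_nonneg hlam0.le n)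
    _ = Real.sqrt 2 * lam ^ n * 1 := by ring
    _ ≤ Real.sqrt 2 * lam ^ n * eNorm ![u 0, 1] := by
        apply mul_le_mul_of_nonneg_left h1le
        positivity
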